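/- For every real number r ≥ 0, with d₁(r) = (8+r)/(6+r) and d₂(r) = (3+r)/(4+r), the smoothing factor with damping parameter ω = 1 satisfies max(|1 − d₁(r)|, |1 − d₂(r)|) = 2/(6+r) ≤ 1/3, with equality 1/3 at r = 0. -/

import Mathlib

noncomputable def d₁ (r : ℝ) : ℝ := (8 + r) / (6 + r)
noncomputable def d₂ (r : ℝ) : ℝ := (3 + r) / (4 + r)

lemma key (r : ℝ) (hr : 0 ≤ r) :
    max |1 - d₁ r| |1 - d₂ r| = 2 / (6 + r) ∧ 2 / (6 + r) ≤ 1/3 := by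
  have h6 : (0:ℝ) < 6 + r := by linarith
  have h4 : (0:ℝ) < 4 + r := by linarith
  have e1 : 1 - d₁ r = -(2 / (6 + r)) := by
    unfold d₁; field_simp; ring
  have e2 : 1 - d₂ r = 1 / (4 + r) := by
    unfold d₂; field_simp; ring
  rw [e1, e2, abs_neg, abs_of_pos (by positivity), abs_of_pos (by positivity)]
  constructor
  · rw [max_eq_left]
    rw [div_le_div_iff₀ h4 h6]; linarith
  · rw [div_le_div_iff₀ h6 (by norm_num)]; linarith

theorem smoothing_factor_omega_one :
    (∀ r : ℝ, 0 ≤ r →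
      max |1 - d₁ r| |1 - d₂ r| = 2 / (6 + r) ∧ 2 / (6 + r) ≤ 1/3) ∧
    max |1 - d₁ 0| |1 - d₂ 0| = 1/3 := by
  refine ⟨fun r hr => key r hr, ?_⟩
  rw [(key 0 le_rfl).1]; norm_num
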